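/- Let H be a generalized star (spider) graph with k ≥ 2 legs. Then for every integer q ≥ 1, Z_q(H) = k − 1. -/

import Mathlib

namespace ZqForcing

variable {V : Type*}

/-- `u` forces `v` within the allowed vertex set `A`, given the filled set `F`:
`u` is filled, `v` is its unique unfilled neighbor inside `A`. -/
def forceIn (G : SimpleGraph V) (A F : Set V) (u v : V) : Prop :=
  u ∈ A ∧ v ∈ A ∧ u ∈ F ∧ v ∉ F ∧ G.Adj u v ∧
    ∀ w ∈ A, G.Adj u w → w ∉ F → w = v

/-- One step of the standard zero forcing color change rule. -/
def zfStep (G : SimpleGraph V) (F F' : Set V) : Prop :=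
  ∃ u v, forceIn G Set.univ F u v ∧ F' = insert v F

/-- `S` is a zero forcing set: repeated color changes fill all of `V`. -/
def IsZeroForcingSet (G : SimpleGraph V) (S : Set V) : Prop :=
  Relation.ReflTransGen (zfStep G) S Set.univ

/-- The zero forcing number `Z(G)`. -/
noncomputable def zeroForcingNumber (G : SimpleGraph V) : ℕ :=
  sInf {n | ∃ S : Set V, S.ncard = n ∧ IsZeroForcingSet G S}

/-- Reachability in `G - F`, i.e. through vertices avoiding `F`. -/
def reachAvoid (G : SimpleGraph V) (F : Set V) : V → V → Prop :=
  Relation.ReflTransGen (fun a b => G.Adj a b ∧ a ∉ F ∧ b ∉ F)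

/-- The positive semidefinite color change rule: filled `u` forces unfilled `v` when `v`
is the unique neighbor of `u` in the connected component of `G - F` containing `v`. -/
def psdForce (G : SimpleGraph V) (F : Set V) (u v : V) : Prop :=
  u ∈ F ∧ v ∉ F ∧ G.Adj u v ∧
    ∀ w, G.Adj u w → w ∉ F → reachAvoid G F v w → w = v

/-- One step of the positive semidefinite color change rule. -/
def psdStep (G : SimpleGraph V) (F F' : Set V) : Prop :=
  ∃ u v, psdForce G F u v ∧ F' = insert v F

/-- `S` is a positive semidefinite zero forcing set. -/
def IsPSDForcingSet (G : SimpleGraph V) (S : Set V) : Prop :=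
  Relation.ReflTransGen (psdStep G) S Set.univ

/-- The positive semidefinite zero forcing number `Z₊(G)`. -/
noncomputable def psdZeroForcingNumber (G : SimpleGraph V) : ℕ :=
  sInf {n | ∃ S : Set V, S.ncard = n ∧ IsPSDForcingSet G S}

/-- The vertex sets of the connected components of the subgraph induced on
the unfilled vertices. -/
def unfilledComponents (G : SimpleGraph V) (F : Set V) : Set (Set V) :=
  {C | ∃ v, v ∉ F ∧ C = {w | reachAvoid G F v w}}

/-- A forcing step performed inside the induced subgraph on the vertex set `A`. -/
def rule3Step (G : SimpleGraph V) (A F F' : Set V) : Prop :=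
  ∃ u v, forceIn G A F u v ∧ F' = insert v F

/-- `ZqWinFrom G q F t`: starting from the filled set `F`, the player can guarantee to
fill all vertices using at most `t` further tokens against every oracle strategy, in the
`q`-analogue zero forcing game. -/
inductive ZqWinFrom (G : SimpleGraph V) (q : ℕ) : Set V → ℕ → Prop
  | done (t : ℕ) : ZqWinFrom G q Set.univ t
  | rule1 {F : Set V} {t : ℕ} (v : V) (hv : v ∉ F)
      (h : ZqWinFrom G q (insert v F) t) : ZqWinFrom G q F (t + 1)
  | rule2 {F : Set V} {t : ℕ} (u v : V) (huv : forceIn G Set.univ F u v)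
      (h : ZqWinFrom G q (insert v F) t) : ZqWinFrom G q F t
  | rule3 {F : Set V} {t : ℕ} (𝒞 : Set (Set V))
      (h𝒞 : 𝒞 ⊆ unfilledComponents G F) (hcard : q + 1 ≤ 𝒞.ncard)
      (next : ∀ 𝒮 : Set (Set V), 𝒮 ⊆ 𝒞 → 𝒮.Nonempty → Set V)
      (hnext : ∀ (𝒮 : Set (Set V)) (h1 : 𝒮 ⊆ 𝒞) (h2 : 𝒮.Nonempty),
        Relation.ReflTransGen (rule3Step G (F ∪ ⋃₀ 𝒮)) F (next 𝒮 h1 h2))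
      (h : ∀ (𝒮 : Set (Set V)) (h1 : 𝒮 ⊆ 𝒞) (h2 : 𝒮.Nonempty),
        ZqWinFrom G q (next 𝒮 h1 h2) t) :
      ZqWinFrom G q F t

/-- The `q`-analogue zero forcing number `Z_q(G)`. -/
noncomputable def qZeroForcingNumber (G : SimpleGraph V) (q : ℕ) : ℕ :=
  sInf {t | ZqWinFrom G q ∅ t}

/-- The induced subgraph on `B` is connected and has no cut vertex. -/
def NoCutVertex (G : SimpleGraph V) (B : Set V) : Prop :=
  (G.induce B).Connected ∧
    ∀ v ∈ B, (B \ {v}).Nonempty → (G.induce (B \ {v})).Connected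

/-- `B` is a block of `G`: a maximal (vertex set of a) connected subgraph without
a cut vertex. -/
def IsBlock (G : SimpleGraph V) (B : Set V) : Prop :=
  NoCutVertex G B ∧ ∀ B' : Set V, B ⊆ B' → NoCutVertex G B' → B' = B

/-- A block graph: a connected graph each of whose blocks is a clique. -/
def IsBlockGraph (G : SimpleGraph V) : Prop :=
  G.Connected ∧ ∀ B : Set V, IsBlock G B → G.IsClique B

/-- A cactus graph: connected, and every edge lies on at most one cycle
(cycles being identified when they have the same edge set). -/
def IsCactus (G : SimpleGraph V) : Prop :=
  G.Connected ∧ ∀ (a b : V) (c : G.Walk a a) (d : G.Walk b b),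
    c.IsCycle → d.IsCycle → ∀ e ∈ c.edges, e ∈ d.edges →
      ∀ e', e' ∈ c.edges ↔ e' ∈ d.edges

/-- `c` is an induced (chordless) cycle of `G`. -/
def IsInducedCycle (G : SimpleGraph V) {v : V} (c : G.Walk v v) : Prop :=
  c.IsCycle ∧ ∀ x ∈ c.support, ∀ y ∈ c.support, G.Adj x y → s(x, y) ∈ c.edges

/-- Generalized windmill graph of Type I: η disjoint copies of `K_k` together with
`l` central vertices forming a clique, each central vertex adjacent to everything. -/
def windmillI (η k l : ℕ) : SimpleGraph ((Fin η × Fin k) ⊕ Fin l) :=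
  SimpleGraph.fromRel (fun a b =>
    match a, b with
    | Sum.inl (i, _), Sum.inl (i', _) => i = i'
    | Sum.inr _, Sum.inr _ => True
    | _, _ => True)

/-- Generalized windmill graph of Type II: η disjoint copies of `K_k` together with
`l` pairwise nonadjacent central vertices, each adjacent to every clique vertex. -/
def windmillII (η k l : ℕ) : SimpleGraph ((Fin η × Fin k) ⊕ Fin l) :=
  SimpleGraph.fromRel (fun a b =>
    match a, b with
    | Sum.inl (i, _), Sum.inl (i', _) => i = i'
    | Sum.inr _, Sum.inr _ => False
    | _, _ => True)

/-- Generalized star (spider) graph: a center `none` together with `k` disjoint paths,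
the `i`-th of length `m i`, attached to the center at one endpoint. -/
def spider {k : ℕ} (m : Fin k → ℕ) : SimpleGraph (Option (Σ i : Fin k, Fin (m i))) :=
  SimpleGraph.fromRel (fun a b =>
    match a, b with
    | none, some ⟨_, j⟩ => j.val = 0
    | some ⟨i, j⟩, some ⟨i', j'⟩ => i = i' ∧ j.val + 1 = j'.val
    | _, _ => False)


/-! ### Auxiliary material for the proof of `stmt16` -/

section Spider

variable {k : ℕ} {m : Fin k → ℕ} {q : ℕ}

/-- The vertex set of leg `i` of the spider. -/
def legSet (m : Fin k → ℕ) (i : Fin k) : Set (Option (Σ i : Fin k, Fin (m i))) :=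
  {v | ∃ j, v = some ⟨i, j⟩}

/-- The set of legs untouched by `F`. -/
def UT (m : Fin k → ℕ) (F : Set (Option (Σ i : Fin k, Fin (m i)))) : Set (Fin k) :=
  {i | ∀ j : Fin (m i), some ⟨i, j⟩ ∉ F}

lemma adj_none_some {i : Fin k} {j : Fin (m i)} :
    (spider m).Adj none (some ⟨i, j⟩) ↔ (j : ℕ) = 0 := by
  simp [spider, SimpleGraph.fromRel_adj]

lemma adj_some_some {i i' : Fin k} {j : Fin (m i)} {j' : Fin (m i')} :
    (spider m).Adj (some ⟨i, j⟩) (some ⟨i', j'⟩) ↔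
      (some ⟨i,j⟩ : Option (Σ i : Fin k, Fin (m i))) ≠ some ⟨i',j'⟩ ∧
      ((i = i' ∧ (j:ℕ) + 1 = j') ∨ (i' = i ∧ (j':ℕ) + 1 = j)) := by
  simp [spider, SimpleGraph.fromRel_adj]

lemma adj_none_elim {w} (h : (spider m).Adj none w) :
    ∃ (i : Fin k) (j : Fin (m i)), w = some ⟨i, j⟩ ∧ (j : ℕ) = 0 := by
  match w with
  | none => simp at h
  | some ⟨i, j⟩ => exact ⟨i, j, rfl, adj_none_some.1 h⟩

lemma adj_some_elim {i : Fin k} {j : Fin (m i)} {w}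
    (h : (spider m).Adj (some ⟨i, j⟩) w) :
    (w = none ∧ (j : ℕ) = 0) ∨
      (∃ j₂ : Fin (m i), w = some ⟨i, j₂⟩ ∧ ((j:ℕ) + 1 = j₂ ∨ (j₂:ℕ) + 1 = j)) := by
  match w with
  | none => exact Or.inl ⟨rfl, adj_none_some.1 h.symm⟩
  | some ⟨i', j'⟩ =>
    right
    rcases (adj_some_some.1 h).2 with ⟨rfl, hj⟩ | ⟨rfl, hj⟩
    · exact ⟨j', rfl, Or.inl hj⟩
    · exact ⟨j', rfl, Or.inr hj⟩

lemma adj_none_some' {i : Fin k} (h : 0 < m i) :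
    (spider m).Adj none (some ⟨i, ⟨0, h⟩⟩) := adj_none_some.2 rfl

lemma adj_succ {i : Fin k} {a b : ℕ} (ha : a < m i) (hb : b < m i) (hab : a + 1 = b) :
    (spider m).Adj (some ⟨i, ⟨a, ha⟩⟩) (some ⟨i, ⟨b, hb⟩⟩) := by
  rw [adj_some_some]
  refine ⟨?_, Or.inl ⟨rfl, hab⟩⟩
  intro hcon
  have h1 := (Sigma.mk.inj_iff.1 (Option.some_injective _ hcon)).2
  have h2 : a = b := congrArg Fin.val (eq_of_heq h1)
  omega

end Spider

section Reach

variable {V : Type*}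

lemma reachAvoid_symm {G : SimpleGraph V} {F : Set V} : Symmetric (reachAvoid G F) :=
  by
    intro a b h
    induction h with
    | refl => exact .refl
    | tail _ h2 ih => exact .head ⟨h2.1.symm, h2.2.2, h2.2.1⟩ ih

lemma comp_repr {G : SimpleGraph V} {F C : Set V} (hC : C ∈ unfilledComponents G F)
    {x} (hx : x ∈ C) : C = {w | reachAvoid G F x w} := by
  obtain ⟨v, hv, rfl⟩ := hC
  have hvx : reachAvoid G F v x := hx
  ext w
  constructor
  · intro hw; exact (reachAvoid_symm hvx).trans hw
  · intro hw; exact hvx.trans hw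

lemma rtg_rule3_subset {G : SimpleGraph V} {A F F' : Set V} (hFA : F ⊆ A)
    (h : Relation.ReflTransGen (rule3Step G A) F F') : F' ⊆ A := by
  induction h with
  | refl => exact hFA
  | tail _ h2 ih =>
    obtain ⟨u, v, hf, rfl⟩ := h2
    exact Set.insert_subset hf.2.1 ih

lemma rtg_eq_of_no_step {G : SimpleGraph V} {A F F' : Set V}
    (h0 : ∀ F2, ¬ rule3Step G A F F2)
    (h : Relation.ReflTransGen (rule3Step G A) F F') : F' = F := by
  rcases h.cases_head with h' | ⟨b, hb, _⟩
  · exact h'.symm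
  · exact absurd hb (h0 b)

lemma win_of_rtg {G : SimpleGraph V} {q t : ℕ} {F : Set V}
    (h : Relation.ReflTransGen (zfStep G) F Set.univ) : ZqWinFrom G q F t := by
  induction h using Relation.ReflTransGen.head_induction_on with
  | refl => exact .done t
  | head h' _ ih =>
    obtain ⟨u, v, hf, rfl⟩ := h'
    exact .rule2 u v hf ih

end Reach

section SpiderReach

variable {k : ℕ} {m : Fin k → ℕ} {q : ℕ}

lemma reach_stay_leg {F : Set (Option (Σ i : Fin k, Fin (m i)))} (hc : none ∈ F)
    {i : Fin k} {x w} (hx : x ∈ legSet m i)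
    (h : reachAvoid (spider m) F x w) : w ∈ legSet m i := by
  induction h with
  | refl => exact hx
  | tail _ h2 ih =>
    obtain ⟨hadj, _, hcF⟩ := h2
    obtain ⟨j, rfl⟩ := ih
    rcases adj_some_elim hadj with ⟨rfl, _⟩ | ⟨j₂, rfl, _⟩
    · exact absurd hc hcF
    · exact ⟨j₂, rfl⟩

lemma reach_base_aux {F : Set (Option (Σ i : Fin k, Fin (m i)))} {i : Fin k}
    (hi : i ∈ UT m F) :
    ∀ (n : ℕ) (h : n < m i),
      reachAvoid (spider m) F (some ⟨i, ⟨0, Nat.lt_of_le_of_lt (Nat.zero_le n) h⟩⟩)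
        (some ⟨i, ⟨n, h⟩⟩) := by
  intro n
  induction n with
  | zero => intro h; exact Relation.ReflTransGen.refl
  | succ n ih =>
    intro h
    have hn : n < m i := by omega
    exact (ih hn).tail ⟨adj_succ hn h rfl, hi _, hi _⟩

lemma reach_leg {F : Set (Option (Σ i : Fin k, Fin (m i)))} {i : Fin k}
    (hi : i ∈ UT m F) (a b : Fin (m i)) :
    reachAvoid (spider m) F (some ⟨i, a⟩) (some ⟨i, b⟩) := by
  have h1 := reach_base_aux hi a.val a.isLt
  have h2 := reach_base_aux hi b.val b.isLt
  exact (reachAvoid_symm h1).trans h2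

lemma reach_cross {F : Set (Option (Σ i : Fin k, Fin (m i)))} (hc : none ∉ F)
    {i1 i2 : Fin k} (h1 : i1 ∈ UT m F) (h2 : i2 ∈ UT m F)
    (a : Fin (m i1)) (b : Fin (m i2)) :
    reachAvoid (spider m) F (some ⟨i1, a⟩) (some ⟨i2, b⟩) := by
  have p1 : 0 < m i1 := Nat.lt_of_le_of_lt (Nat.zero_le _) a.isLt
  have p2 : 0 < m i2 := Nat.lt_of_le_of_lt (Nat.zero_le _) b.isLt
  refine (reach_leg h1 a ⟨0, p1⟩).trans (Relation.ReflTransGen.trans ?_ (reach_leg h2 ⟨0, p2⟩ b))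
  exact Relation.ReflTransGen.trans
    (Relation.ReflTransGen.single ⟨(adj_none_some' p1).symm, h1 _, hc⟩)
    (Relation.ReflTransGen.single ⟨adj_none_some' p2, hc, h2 _⟩)

lemma comp_eq_leg {F C : Set (Option (Σ i : Fin k, Fin (m i)))}
    (hC : C ∈ unfilledComponents (spider m) F) (hc : none ∈ F)
    {i : Fin k} (hi : i ∈ UT m F) {x} (hxC : x ∈ C) (hx : x ∈ legSet m i) :
    C = legSet m i := by
  rw [comp_repr hC hxC]
  ext w
  constructor
  · intro hw; exact reach_stay_leg hc hx hw
  · rintro ⟨j, rfl⟩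
    obtain ⟨jx, rfl⟩ := hx
    exact reach_leg hi jx j

end SpiderReach

section Lower

variable {k : ℕ} {m : Fin k → ℕ} {q : ℕ}

lemma some_leg_eq {i i' : Fin k} {j : Fin (m i)} {j' : Fin (m i')}
    (h : (some ⟨i, j⟩ : Option (Σ i : Fin k, Fin (m i))) = some ⟨i', j'⟩) : i = i' :=
  congrArg Sigma.fst (Option.some_injective _ h)

lemma lower_main (hm : ∀ i, 1 ≤ m i) (hq : 1 ≤ q)
    {F : Set (Option (Σ i : Fin k, Fin (m i)))} {t : ℕ}
    (h : ZqWinFrom (spider m) q F t) : (UT m F).ncard ≤ t + 1 := by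
  induction h with
  | done t =>
    have h0 : (UT m (Set.univ : Set (Option (Σ i : Fin k, Fin (m i))))) = ∅ := by
      ext i
      constructor
      · intro hi; exact absurd (Set.mem_univ _) (hi ⟨0, hm i⟩)
      · intro hi; exact absurd hi (Set.notMem_empty i)
    rw [h0]
    simp
  | @rule1 F t v hv hwin ih =>
    match v with
    | none =>
      have he : UT m (insert none F) = UT m F := by
        ext i
        constructor
        · intro hi j hj; exact hi j (Set.mem_insert_of_mem _ hj)
        · intro hi j hj
          rcases Set.mem_insert_iff.1 hj with h' | h'
          · exact nomatch h'
          · exact hi j h'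
      rw [he] at ih
      omega
    | some ⟨i₀, j₀⟩ =>
      have hsub : UT m F ⊆ insert i₀ (UT m (insert (some ⟨i₀, j₀⟩) F)) := by
        intro i hi
        by_cases hii : i = i₀
        · exact Set.mem_insert_iff.2 (Or.inl hii)
        · refine Set.mem_insert_iff.2 (Or.inr ?_)
          intro j hj
          rcases Set.mem_insert_iff.1 hj with h' | h'
          · exact hii (some_leg_eq h')
          · exact hi j h'
      have h1 := Set.ncard_le_ncard hsub (Set.toFinite _)
      have h2 := Set.ncard_insert_le i₀ (UT m (insert (some ⟨i₀, j₀⟩) F))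
      omega
  | @rule2 F t u v huv hwin ih =>
    obtain ⟨-, -, huF, hvF, hadj, huniq⟩ := huv
    by_cases hkill : ∃ i₀ ∈ UT m F, v ∈ legSet m i₀
    · obtain ⟨i₀, hi₀, j₀, rfl⟩ := hkill
      have hu : u = none := by
        rcases adj_some_elim hadj.symm with ⟨rfl, _⟩ | ⟨j₂, rfl, _⟩
        · rfl
        · exact absurd huF (hi₀ j₂)
      subst hu
      have hsub : UT m F ⊆ {i₀} := by
        intro i hi
        by_contra hii
        have hne : i ≠ i₀ := by simpa using hii
        have hw := huniq (some ⟨i, ⟨0, hm i⟩⟩) (Set.mem_univ _) (adj_none_some' _) (hi _)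
        exact hne (some_leg_eq hw)
      have h1 := Set.ncard_le_ncard hsub (Set.toFinite _)
      simp only [Set.ncard_singleton] at h1
      omega
    · have hsub : UT m F ⊆ UT m (insert v F) := by
        intro i hi j hj
        rcases Set.mem_insert_iff.1 hj with h' | h'
        · exact hkill ⟨i, hi, j, h'.symm⟩
        · exact hi j h'
      exact le_trans (Set.ncard_le_ncard hsub (Set.toFinite _)) ih
  | @rule3 F t 𝒞 h𝒞 hcard next hnext hwin ih =>
    classical
    by_cases hA : (𝒞 \ {C | ∃ i ∈ UT m F, ∃ x ∈ C, x ∈ legSet m i}).Nonempty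
    · have h1 : 𝒞 \ {C | ∃ i ∈ UT m F, ∃ x ∈ C, x ∈ legSet m i} ⊆ 𝒞 := Set.diff_subset
      have hstep := hnext _ h1 hA
      have hsub := rtg_rule3_subset Set.subset_union_left hstep
      have hUT : UT m F ⊆ UT m (next _ h1 hA) := by
        intro i hi j hj
        rcases (Set.mem_union _ _ _).1 (hsub hj) with hF | hS
        · exact hi j hF
        · obtain ⟨C, hC, hxC⟩ := hS
          exact hC.2 ⟨i, hi, _, hxC, ⟨j, rfl⟩⟩
      exact le_trans (Set.ncard_le_ncard hUT (Set.toFinite _)) (ih _ h1 hA)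
    · have hCU : ∀ C ∈ 𝒞, ∃ i ∈ UT m F, ∃ x ∈ C, x ∈ legSet m i := by
        intro C hC
        by_contra hcon
        exact hA ⟨C, hC, hcon⟩
      have h2 : 1 < 𝒞.ncard := by omega
      obtain ⟨C1, hC1, C2, hC2, hne⟩ := (Set.one_lt_ncard (Set.toFinite _)).1 h2
      by_cases hc : (none : Option (Σ i : Fin k, Fin (m i))) ∈ F
      · -- all selected components are entire untouched legs; no force is possible
        have hleg : ∀ C ∈ 𝒞, ∃ i ∈ UT m F, C = legSet m i := by
          intro C hC
          obtain ⟨i, hi, x, hxC, hx⟩ := hCU C hC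
          exact ⟨i, hi, comp_eq_leg (h𝒞 hC) hc hi hxC hx⟩
        have hCne : 𝒞.Nonempty := ⟨C1, hC1⟩
        have hnostep : ∀ F2, ¬ rule3Step (spider m) (F ∪ ⋃₀ 𝒞) F F2 := by
          rintro F2 ⟨u, v, hf, rfl⟩
          obtain ⟨huA, hvA, huF, hvF, hadj, huniq⟩ := hf
          have hvS : v ∈ ⋃₀ 𝒞 := by
            rcases (Set.mem_union _ _ _).1 hvA with h' | h'
            · exact absurd h' hvF
            · exact h'
          obtain ⟨C, hC, hvC⟩ := hvS
          obtain ⟨i, hi, rfl⟩ := hleg C hC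
          obtain ⟨j, rfl⟩ := hvC
          have hu : u = none := by
            rcases adj_some_elim hadj.symm with ⟨rfl, _⟩ | ⟨j₂, rfl, _⟩
            · rfl
            · exact absurd huF (hi j₂)
          subst hu
          obtain ⟨C', hC', hne'⟩ : ∃ C' ∈ 𝒞, C' ≠ legSet m i := by
            rcases eq_or_ne C1 (legSet m i) with he | he
            · exact ⟨C2, hC2, by rw [← he]; exact hne.symm⟩
            · exact ⟨C1, hC1, he⟩
          obtain ⟨i', hi', rfl⟩ := hleg C' hC'
          have hii : i' ≠ i := fun hh => hne' (by rw [hh])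
          have hw := huniq (some ⟨i', ⟨0, hm i'⟩⟩)
            ((Set.mem_union _ _ _).2 (Or.inr ⟨legSet m i', hC', ⟨_, rfl⟩⟩))
            (adj_none_some' _) (hi' _)
          exact hii (some_leg_eq hw)
        have hnexteq : next 𝒞 (subset_refl _) hCne = F :=
          rtg_eq_of_no_step hnostep (hnext _ _ _)
        have h3 := ih 𝒞 (subset_refl _) hCne
        rwa [hnexteq] at h3
      · -- center unfilled: all untouched legs lie in one component, contradiction
        exfalso
        obtain ⟨i1, hi1, x1, hx1C, j1, rfl⟩ := hCU C1 hC1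
        obtain ⟨i2, hi2, x2, hx2C, j2, rfl⟩ := hCU C2 hC2
        apply hne
        rw [comp_repr (h𝒞 hC1) hx1C, comp_repr (h𝒞 hC2) hx2C]
        have hr := reach_cross hc hi1 hi2 j1 j2
        ext w
        constructor
        · intro hw; exact (reachAvoid_symm hr).trans hw
        · intro hw; exact hr.trans hw

end Lower

section Upper

variable {k : ℕ} {m : Fin k → ℕ} {q : ℕ}

/-- Forcing chain down a leg: if the top part of leg `i` (from index `j` up) is filled,
then the whole leg can be filled by ordinary forces. -/
lemma legDown (i : Fin k) :
    ∀ (j : ℕ) (F : Set (Option (Σ i : Fin k, Fin (m i)))), j < m i →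
      (∀ j', j ≤ j' → ∀ (h : j' < m i), some ⟨i, ⟨j', h⟩⟩ ∈ F) →
      Relation.ReflTransGen (zfStep (spider m)) F (F ∪ legSet m i) := by
  intro j
  induction j with
  | zero =>
    intro F _ hF
    have he : F ∪ legSet m i = F := by
      apply Set.union_eq_self_of_subset_right
      rintro v ⟨j₂, rfl⟩
      exact hF j₂.val (Nat.zero_le _) j₂.isLt
    rw [he]
  | succ j ihj =>
    intro F hj hF
    have hjm : j < m i := lt_trans (Nat.lt_succ_self j) hj
    by_cases hv : some ⟨i, ⟨j, hjm⟩⟩ ∈ F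
    · refine ihj F hjm (fun j' hj' h => ?_)
      rcases Nat.eq_or_lt_of_le hj' with rfl | h2
      · exact hv
      · exact hF j' h2 h
    · have hstep : zfStep (spider m) F (insert (some ⟨i, ⟨j, hjm⟩⟩) F) := by
        refine ⟨some ⟨i, ⟨j + 1, hj⟩⟩, some ⟨i, ⟨j, hjm⟩⟩,
          ⟨Set.mem_univ _, Set.mem_univ _, hF (j+1) (le_refl _) hj, hv,
            (adj_succ hjm hj rfl).symm, ?_⟩, rfl⟩
        intro w _ hadj hwF
        rcases adj_some_elim hadj with ⟨rfl, h0⟩ | ⟨j₂, rfl, hcase⟩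
        · simp only [Fin.val_mk] at h0; omega
        · simp only [Fin.val_mk] at hcase
          rcases hcase with hup | hdown
          · exact absurd (hF j₂.val (by omega) j₂.isLt) hwF
          · have hj₂ : j₂ = ⟨j, hjm⟩ := Fin.ext (by simp only [Fin.val_mk]; omega)
            rw [hj₂]
      have hrest := ihj (insert (some ⟨i, ⟨j, hjm⟩⟩) F) hjm (fun j' hj' h => ?_)
      · have he : insert (some ⟨i, ⟨j, hjm⟩⟩) F ∪ legSet m i = F ∪ legSet m i := by
          rw [Set.insert_union]
          exact Set.insert_eq_self.2 (Or.inr ⟨_, rfl⟩)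
        rw [he] at hrest
        exact Relation.ReflTransGen.head hstep hrest
      · rcases Nat.eq_or_lt_of_le hj' with rfl | h2
        · exact Set.mem_insert _ _
        · exact Set.mem_insert_of_mem _ (hF j' h2 h)

/-- Forcing chain up a leg: if the center and the bottom part of leg `i` (up to `jv`)
are filled, the whole leg can be filled by ordinary forces. -/
lemma legUp (i : Fin k) :
    ∀ (d : ℕ) (jv : ℕ) (F : Set (Option (Σ i : Fin k, Fin (m i)))), none ∈ F →
      ∀ (hjv : jv < m i), m i - 1 - jv = d →
      (∀ j', j' ≤ jv → ∀ (h : j' < m i), some ⟨i, ⟨j', h⟩⟩ ∈ F) →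
      Relation.ReflTransGen (zfStep (spider m)) F (F ∪ legSet m i) := by
  intro d
  induction d with
  | zero =>
    intro jv F _ hjv hd hF
    have he : F ∪ legSet m i = F := by
      apply Set.union_eq_self_of_subset_right
      rintro v ⟨j₂, rfl⟩
      exact hF j₂.val (by omega) j₂.isLt
    rw [he]
  | succ d ihd =>
    intro jv F hc hjv hd hF
    have hjv1 : jv + 1 < m i := by omega
    by_cases hv : some ⟨i, ⟨jv + 1, hjv1⟩⟩ ∈ F
    · refine ihd (jv+1) F hc hjv1 (by omega) (fun j' hj' h => ?_)
      rcases Nat.eq_or_lt_of_le hj' with rfl | h2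
      · exact hv
      · exact hF j' (by omega) h
    · have hstep : zfStep (spider m) F (insert (some ⟨i, ⟨jv + 1, hjv1⟩⟩) F) := by
        refine ⟨some ⟨i, ⟨jv, hjv⟩⟩, some ⟨i, ⟨jv + 1, hjv1⟩⟩,
          ⟨Set.mem_univ _, Set.mem_univ _, hF jv (le_refl _) hjv, hv,
            adj_succ hjv hjv1 rfl, ?_⟩, rfl⟩
        intro w _ hadj hwF
        rcases adj_some_elim hadj with ⟨rfl, h0⟩ | ⟨j₂, rfl, hcase⟩
        · exact absurd hc hwF
        · simp only [Fin.val_mk] at hcase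
          rcases hcase with hup | hdown
          · have hj₂ : j₂ = ⟨jv + 1, hjv1⟩ := Fin.ext (by simp only [Fin.val_mk]; omega)
            rw [hj₂]
          · exact absurd (hF j₂.val (by omega) j₂.isLt) hwF
      have hrest := ihd (jv+1) (insert (some ⟨i, ⟨jv + 1, hjv1⟩⟩) F)
        (Set.mem_insert_of_mem _ hc) hjv1 (by omega) (fun j' hj' h => ?_)
      · have he : insert (some ⟨i, ⟨jv + 1, hjv1⟩⟩) F ∪ legSet m i = F ∪ legSet m i := by
          rw [Set.insert_union]
          exact Set.insert_eq_self.2 (Or.inr ⟨_, rfl⟩)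
        rw [he] at hrest
        exact Relation.ReflTransGen.head hstep hrest
      · rcases Nat.eq_or_lt_of_le hj' with rfl | h2
        · exact Set.mem_insert _ _
        · exact Set.mem_insert_of_mem _ (hF j' (by omega) h)

end Upper

section Assemble

variable {k : ℕ} {m : Fin k → ℕ} {q : ℕ}

/-- The leaf of leg `i`. -/
def leafIdx (hm : ∀ i, 1 ≤ m i) (i : Fin k) : Fin (m i) := ⟨m i - 1, by have := hm i; omega⟩

/-- The leaves of the first `n` legs. -/
def leafSet (hm : ∀ i, 1 ≤ m i) (n : ℕ) : Set (Option (Σ i : Fin k, Fin (m i))) :=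
  {v | ∃ i : Fin k, (i : ℕ) < n ∧ v = some ⟨i, leafIdx hm i⟩}

/-- The union of the first `n` legs. -/
def legsU (m : Fin k → ℕ) (n : ℕ) : Set (Option (Σ i : Fin k, Fin (m i))) :=
  {v | ∃ (i : Fin k) (j : Fin (m i)), (i : ℕ) < n ∧ v = some ⟨i, j⟩}

lemma stage1 (hm : ∀ i, 1 ≤ m i) :
    ∀ n, n ≤ k - 1 →
      Relation.ReflTransGen (zfStep (spider m)) (leafSet hm (k-1))
        (leafSet hm (k-1) ∪ legsU m n) := by
  intro n
  induction n with
  | zero =>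
    intro _
    have he : legsU m 0 = (∅ : Set (Option (Σ i : Fin k, Fin (m i)))) := by
      ext v
      constructor
      · rintro ⟨i, j, hi, rfl⟩; omega
      · intro h; exact absurd h (Set.notMem_empty v)
    rw [he, Set.union_empty]
  | succ n ih =>
    intro hn
    have hnk : n < k := by omega
    have hstart := legDown (⟨n, hnk⟩ : Fin k) (m ⟨n, hnk⟩ - 1) (leafSet hm (k-1) ∪ legsU m n)
      (by have := hm ⟨n, hnk⟩; omega) ?_
    · have hunion : (leafSet hm (k-1) ∪ legsU m n) ∪ legSet m ⟨n, hnk⟩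
          = leafSet hm (k-1) ∪ legsU m (n+1) := by
        ext v
        constructor
        · rintro ((h | h) | ⟨j, rfl⟩)
          · exact Or.inl h
          · obtain ⟨i', j, hi', rfl⟩ := h
            exact Or.inr ⟨i', j, by omega, rfl⟩
          · exact Or.inr ⟨⟨n, hnk⟩, j, by simp only [Fin.val_mk]; omega, rfl⟩
        · rintro (h | ⟨i', j, hi', rfl⟩)
          · exact Or.inl (Or.inl h)
          · by_cases hlt : (i' : ℕ) < n
            · exact Or.inl (Or.inr ⟨i', j, hlt, rfl⟩)
            · have hie : i' = ⟨n, hnk⟩ := Fin.ext (by simp only [Fin.val_mk]; omega)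
              subst hie
              exact Or.inr ⟨j, rfl⟩
      exact (ih (by omega)).trans (hunion ▸ hstart)
    · intro j' hj' h
      have hj'e : j' = m ⟨n, hnk⟩ - 1 := by omega
      subst hj'e
      exact Or.inl ⟨⟨n, hnk⟩, by simp only [Fin.val_mk]; omega, rfl⟩

lemma upper (hm : ∀ i, 1 ≤ m i) (hk : 2 ≤ k) :
    ZqWinFrom (spider m) q ∅ (k - 1) := by
  classical
  have h0k : (0:ℕ) < k := by omega
  have hlk : k - 1 < k := by omega
  have hC1 : ZqWinFrom (spider m) q (leafSet hm (k-1)) 0 := by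
    apply win_of_rtg
    have s1 := stage1 (k := k) (m := m) hm (k-1) (le_refl _)
    have hnoneF1 : (none : Option (Σ i : Fin k, Fin (m i)))
        ∉ leafSet hm (k-1) ∪ legsU m (k-1) := by
      rintro (⟨i, hi, he⟩ | ⟨i, j, hi, he⟩) <;> exact nomatch he
    have hlegsU_mem : ∀ (i : Fin k) (j : Fin (m i)), (i:ℕ) < k - 1 →
        some ⟨i, j⟩ ∈ leafSet hm (k-1) ∪ legsU m (k-1) :=
      fun i j hi => Or.inr ⟨i, j, hi, rfl⟩
    have hm0 : 0 < m ⟨0, h0k⟩ := hm _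
    have hstep2 : zfStep (spider m) (leafSet hm (k-1) ∪ legsU m (k-1))
        (insert none (leafSet hm (k-1) ∪ legsU m (k-1))) := by
      refine ⟨some ⟨⟨0, h0k⟩, ⟨0, hm0⟩⟩, none,
        ⟨Set.mem_univ _, Set.mem_univ _,
          hlegsU_mem _ _ (by simp only [Fin.val_mk]; omega), hnoneF1,
          (adj_none_some' _).symm, ?_⟩, rfl⟩
      intro w _ hadj hwF
      rcases adj_some_elim hadj with ⟨rfl, _⟩ | ⟨j₂, rfl, hcase⟩
      · rfl
      · exact absurd (hlegsU_mem _ _ (by simp only [Fin.val_mk]; omega)) hwF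
    have hm_last : 0 < m ⟨k-1, hlk⟩ := hm _
    have hvlast_notin : some ⟨⟨k-1, hlk⟩, ⟨0, hm_last⟩⟩
        ∉ insert none (leafSet hm (k-1) ∪ legsU m (k-1)) := by
      intro hmem
      rcases Set.mem_insert_iff.1 hmem with he | he | he
      · exact nomatch he
      · obtain ⟨i, hi, he⟩ := he
        have h1 := some_leg_eq he
        rw [← h1] at hi
        simp only [Fin.val_mk] at hi
        omega
      · obtain ⟨i, j, hi, he⟩ := he
        have h1 := some_leg_eq he
        rw [← h1] at hi
        simp only [Fin.val_mk] at hi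
        omega
    have hstep3 : zfStep (spider m) (insert none (leafSet hm (k-1) ∪ legsU m (k-1)))
        (insert (some ⟨⟨k-1, hlk⟩, ⟨0, hm_last⟩⟩)
          (insert none (leafSet hm (k-1) ∪ legsU m (k-1)))) := by
      refine ⟨none, some ⟨⟨k-1, hlk⟩, ⟨0, hm_last⟩⟩,
        ⟨Set.mem_univ _, Set.mem_univ _, Set.mem_insert _ _, hvlast_notin,
          adj_none_some' _, ?_⟩, rfl⟩
      intro w _ hadj hwF
      obtain ⟨i, j, rfl, hj0⟩ := adj_none_elim hadj
      by_cases hlt : (i:ℕ) < k - 1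
      · exact absurd (Set.mem_insert_of_mem _ (hlegsU_mem i j hlt)) hwF
      · have hie : i = ⟨k-1, hlk⟩ := Fin.ext (by simp only [Fin.val_mk]; omega)
        subst hie
        have hje : j = ⟨0, hm_last⟩ := Fin.ext (by simp only [Fin.val_mk]; omega)
        rw [hje]
    have s4 := legUp (m := m) ⟨k-1, hlk⟩ (m ⟨k-1, hlk⟩ - 1 - 0) 0
      (insert (some ⟨⟨k-1, hlk⟩, ⟨0, hm_last⟩⟩)
        (insert none (leafSet hm (k-1) ∪ legsU m (k-1))))
      (Set.mem_insert_of_mem _ (Set.mem_insert _ _)) hm_last rfl ?_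
    · have huniv : insert (some ⟨⟨k-1, hlk⟩, ⟨0, hm_last⟩⟩)
          (insert none (leafSet hm (k-1) ∪ legsU m (k-1))) ∪ legSet m ⟨k-1, hlk⟩
          = Set.univ := by
        ext v
        simp only [Set.mem_univ, iff_true]
        match v with
        | none => exact Or.inl (Set.mem_insert_of_mem _ (Set.mem_insert _ _))
        | some ⟨i, j⟩ =>
          by_cases hlt : (i:ℕ) < k - 1
          · exact Or.inl (Set.mem_insert_of_mem _
              (Set.mem_insert_of_mem _ (hlegsU_mem i j hlt)))
          · have hie : i = ⟨k-1, hlk⟩ := Fin.ext (by simp only [Fin.val_mk]; omega)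
            subst hie
            exact Or.inr ⟨j, rfl⟩
      exact s1.trans (Relation.ReflTransGen.head hstep2
        (Relation.ReflTransGen.head hstep3 (huniv ▸ s4)))
    · intro j' hj' h
      have hj'e : j' = 0 := Nat.le_zero.1 hj'
      subst hj'e
      exact Set.mem_insert _ _
  have key : ∀ d n, n + d = k - 1 → ZqWinFrom (spider m) q (leafSet hm n) d := by
    intro d
    induction d with
    | zero =>
      intro n hn
      have hne : n = k - 1 := by omega
      subst hne
      exact hC1
    | succ d ihd =>
      intro n hn
      have hlt : n < k := by omega
      have hnext := ihd (n+1) (by omega)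
      have hne : some ⟨⟨n, hlt⟩, leafIdx hm ⟨n, hlt⟩⟩ ∉ leafSet hm n := by
        rintro ⟨i', hi', heq⟩
        have h1 := some_leg_eq heq
        rw [← h1] at hi'
        simp only [Fin.val_mk] at hi'
        omega
      have hins : insert (some ⟨⟨n, hlt⟩, leafIdx hm ⟨n, hlt⟩⟩) (leafSet hm n)
          = leafSet hm (n+1) := by
        ext v
        constructor
        · rintro (rfl | ⟨i', hi', rfl⟩)
          · exact ⟨⟨n, hlt⟩, by simp only [Fin.val_mk]; omega, rfl⟩
          · exact ⟨i', by omega, rfl⟩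
        · rintro ⟨i', hi', rfl⟩
          by_cases h2 : (i' : ℕ) < n
          · exact Set.mem_insert_of_mem _ ⟨i', h2, rfl⟩
          · have hie : i' = ⟨n, hlt⟩ := Fin.ext (by simp only [Fin.val_mk]; omega)
            subst hie
            exact Set.mem_insert _ _
      rw [← hins] at hnext
      exact ZqWinFrom.rule1 _ hne hnext
  have h0 : leafSet hm 0 = (∅ : Set (Option (Σ i : Fin k, Fin (m i)))) := by
    ext v
    constructor
    · rintro ⟨i, hi, rfl⟩; omega
    · intro h; exact absurd h (Set.notMem_empty v)
  have hfin := key (k-1) 0 (by omega)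
  rwa [h0] at hfin

end Assemble


/-- for a generalized star (spider) graph with `k ≥ 2` nontrivial legs,
`Z_q(H) = k - 1` for every `q ≥ 1`. -/
theorem stmt16 (k : ℕ) (hk : 2 ≤ k) (m : Fin k → ℕ) (hm : ∀ i, 1 ≤ m i)
    (q : ℕ) (hq : 1 ≤ q) :
    qZeroForcingNumber (spider m) q = k - 1 := by
  have hub : ZqWinFrom (spider m) q ∅ (k - 1) := upper hm hk
  have hmem : (k-1) ∈ {t | ZqWinFrom (spider m) q ∅ t} := hub
  rw [qZeroForcingNumber]
  refine le_antisymm (Nat.sInf_le hmem) (le_csInf ⟨k-1, hmem⟩ ?_)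
  intro t ht
  have hle := lower_main hm hq ht
  have hU : (UT m (∅ : Set (Option (Σ i : Fin k, Fin (m i))))).ncard = k := by
    have he : UT m (∅ : Set (Option (Σ i : Fin k, Fin (m i)))) = Set.univ := by
      ext i
      simp [UT]
    rw [he, Set.ncard_univ]
    simp [Nat.card_eq_fintype_card]
  omega

end ZqForcing
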